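/- In the t-BMW algebra, for |i-j|=1 one has f_i f_j f_i = e_j h_i e_j. -/
import Mathlib

/-- In the t-BMW algebra, for `|i-j| = 1` one has `f_i f_j f_i = e_j h_i e_j`. -/
theorem tBMW_fff {A : Type*} [Ring A]
    (hi hj ei ej fi fj : A)
    (hff : fi * fj = ej * hi * hj * ei)
    (hef : ei * fi = fi) (hfe : fi * ei = fi)
    (hhf : hj * fi = hj * hi * ej)
    (hhh : hi * hj * hi = hi) :
    fi * fj * fi = ej * hi * ej := by
  calc fi * fj * fi = ej * hi * hj * (ei * fi) := by rw [hff]; noncomm_ring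
    _ = ej * hi * (hj * fi) := by rw [hef]; noncomm_ring
    _ = ej * (hi * hj * hi) * ej := by rw [hhf]; noncomm_ring
    _ = ej * hi * ej := by rw [hhh]
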